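/- Let u_n be a sequence of a.e. finite functions on Λ and U_n := G_{1,N}(u_n) their generalized N-means. There exists an a.e. finite function U on Λ^N with U_n → U a.e. on Λ^N if and only if there exists an a.e. finite function u on Λ with u_n → u a.e. on Λ; and in that case U = G_{1,N}(u) a.e. -/

import Mathlib

open MeasureTheory Filter

theorem coord_ae' {Λ : Type*} [MeasurableSpace Λ] (μ : Measure Λ)
    [SigmaFinite μ] {N : ℕ} (i : Fin N) {P : Λ → Prop} (h : ∀ᵐ y ∂μ, P y) :
    ∀ᵐ x ∂(Measure.pi fun _ : Fin N => μ), P (x i) := by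
  rw [ae_iff] at h ⊢
  obtain ⟨B, hsub, hBm, hB0⟩ := exists_measurable_superset_of_null h
  refine measure_mono_null (t := Function.eval i ⁻¹' B) (fun x hx => hsub hx) ?_
  rw [Set.eval_preimage, Measure.pi_pi]
  refine Finset.prod_eq_zero (Finset.mem_univ i) ?_
  simp [hB0]

theorem pi_ne_zero' {Λ : Type*} [MeasurableSpace Λ] {μ : Measure Λ}
    [SigmaFinite μ] (hμ : μ ≠ 0) (k : ℕ) : (Measure.pi fun _ : Fin k => μ) ≠ 0 := by
  have h : (Measure.pi fun _ : Fin k => μ) Set.univ ≠ 0 := by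
    rw [← Set.pi_univ Set.univ, Measure.pi_pi]
    exact Finset.prod_ne_zero_iff.mpr fun i _ => Measure.measure_univ_ne_zero.mpr hμ
  intro h0
  rw [h0] at h
  simp at h

theorem means_tendsto' {Λ : Type*} [MeasurableSpace Λ] (μ : Measure Λ)
    [SigmaFinite μ] (N : ℕ) (u : ℕ → Λ → ℝ) (v : Λ → ℝ)
    (hv : ∀ᵐ y ∂μ, Tendsto (fun n => u n y) atTop (nhds (v y))) :
    ∀ᵐ x ∂(Measure.pi fun _ : Fin N => μ),
      Tendsto (fun n => (N : ℝ)⁻¹ * ∑ i, u n (x i)) atTop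
        (nhds ((N : ℝ)⁻¹ * ∑ i, v (x i))) := by
  have h := ae_all_iff.mpr fun i : Fin N => coord_ae' μ i hv
  filter_upwards [h] with x hx
  exact (tendsto_finset_sum _ fun i _ => hx i).const_mul _

/-- Lemma 2: for `m = 1`, the sequence of generalized `N`-means
`U_n = G_{1,N}(u_n)` has an a.e. finite a.e. limit `U` if and only if the kernels
`u_n` have an a.e. finite a.e. limit `u`; and in that case `U = G_{1,N}(u)` a.e. -/
theorem gmean_one_ae_tendsto_iff {Λ : Type*} [MeasurableSpace Λ] (μ : Measure Λ)
    [SigmaFinite μ] [μ.IsComplete] (hμ : μ ≠ 0) (N : ℕ) (hN : 1 ≤ N)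
    (u : ℕ → Λ → ℝ) :
    ((∃ U : (Fin N → Λ) → ℝ, ∀ᵐ x ∂(Measure.pi fun _ : Fin N => μ),
        Tendsto (fun n => (N : ℝ)⁻¹ * ∑ i, u n (x i)) atTop (nhds (U x))) ↔
      (∃ v : Λ → ℝ, ∀ᵐ y ∂μ, Tendsto (fun n => u n y) atTop (nhds (v y)))) ∧
    ∀ U : (Fin N → Λ) → ℝ, ∀ v : Λ → ℝ,
      (∀ᵐ x ∂(Measure.pi fun _ : Fin N => μ),
        Tendsto (fun n => (N : ℝ)⁻¹ * ∑ i, u n (x i)) atTop (nhds (U x))) →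
      (∀ᵐ y ∂μ, Tendsto (fun n => u n y) atTop (nhds (v y))) →
      U =ᵐ[Measure.pi fun _ : Fin N => μ] fun x => (N : ℝ)⁻¹ * ∑ i, v (x i) := by
  constructor
  · constructor
    · -- hard direction
      rintro ⟨U, hU⟩
      obtain ⟨m, rfl⟩ : ∃ m, N = m + 1 := ⟨N - 1, (Nat.succ_pred_eq_of_pos hN).symm⟩
      set π : Measure (Fin (m+1) → Λ) := Measure.pi fun _ : Fin (m+1) => μ with hπdef
      set πm : Measure (Fin m → Λ) := Measure.pi fun _ : Fin m => μ with hπmdef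
      have hπ : π ≠ 0 := pi_ne_zero' hμ (m+1)
      have hπm : πm ≠ 0 := pi_ne_zero' hμ m
      have hπne : (ae π).NeBot := ae_neBot.mpr hπ
      have hπmne : (ae πm).NeBot := ae_neBot.mpr hπm
      have hc0 : ((m+1 : ℕ) : ℝ) ≠ 0 := Nat.cast_ne_zero.mpr (Nat.succ_ne_zero m)
      -- sums converge a.e.
      have hS : ∀ᵐ x ∂π, ∃ L, Tendsto (fun n => ∑ i, u n (x i)) atTop (nhds L) := by
        filter_upwards [hU] with x hx
        refine ⟨((m+1 : ℕ) : ℝ) * U x, ?_⟩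
        have := hx.const_mul ((m+1 : ℕ) : ℝ)
        simpa only [← mul_assoc, mul_inv_cancel₀ hc0, one_mul] using this
      -- transfer to product measure
      set e := MeasurableEquiv.piFinSuccAbove (fun _ : Fin (m+1) => Λ) 0 with hedef
      have hmp : MeasurePreserving e π (μ.prod πm) :=
        measurePreserving_piFinSuccAbove (fun _ => μ) 0
      have h2 : ∀ᵐ p ∂(μ.prod πm),
          ∃ L, Tendsto (fun n => u n p.1 + ∑ j, u n (p.2 j)) atTop (nhds L) := by
        have h2' := (MeasurePreserving.symm e hmp).quasiMeasurePreserving.ae hS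
        filter_upwards [h2'] with p hp
        obtain ⟨L, hL⟩ := hp
        refine ⟨L, ?_⟩
        have heq : ∀ n, (∑ i, u n (e.symm p i)) = u n p.1 + ∑ j, u n (p.2 j) := by
          intro n
          rw [Fin.sum_univ_succ]
          simp [hedef, MeasurableEquiv.piFinSuccAbove, Fin.insertNthEquiv]
        simpa only [heq] using hL
      -- swap and Fubini
      have h2s : ∀ᵐ q ∂(πm.prod μ),
          ∃ L, Tendsto (fun n => u n q.2 + ∑ j, u n (q.1 j)) atTop (nhds L) :=
        (Measure.measurePreserving_swap).quasiMeasurePreserving.ae h2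
      have h3 := Measure.ae_ae_of_ae_prod h2s
      obtain ⟨z₀, hz₀⟩ := h3.exists
      set c : ℕ → ℝ := fun n => ∑ j, u n (z₀ j) with hcdef
      -- c converges
      have h4 : ∀ᵐ x ∂π, ∀ i : Fin (m+1),
          ∃ L, Tendsto (fun n => u n (x i) + c n) atTop (nhds L) :=
        ae_all_iff.mpr fun i => coord_ae' μ i hz₀
      obtain ⟨x₀, hx₀S, hx₀4⟩ := (hS.and h4).exists
      obtain ⟨L₀, hL₀⟩ := hx₀S
      choose L hL using hx₀4
      have hsum : Tendsto (fun n => ∑ i, (u n (x₀ i) + c n)) atTop (nhds (∑ i, L i)) :=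
        tendsto_finset_sum _ fun i _ => hL i
      have hsum' : Tendsto (fun n => (∑ i, u n (x₀ i)) + ((m+1 : ℕ) : ℝ) * c n) atTop
          (nhds (∑ i, L i)) := by
        have heq : ∀ n, (∑ i : Fin (m+1), (u n (x₀ i) + c n))
            = (∑ i, u n (x₀ i)) + ((m+1 : ℕ) : ℝ) * c n := by
          intro n
          rw [Finset.sum_add_distrib, Finset.sum_const]
          simp [mul_comm]
        simpa only [heq] using hsum
      have hmc : Tendsto (fun n => ((m+1 : ℕ) : ℝ) * c n) atTop
          (nhds ((∑ i, L i) - L₀)) := by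
        have := hsum'.sub hL₀
        simpa using this
      have hC : ∃ C, Tendsto c atTop (nhds C) := by
        refine ⟨((m+1 : ℕ) : ℝ)⁻¹ * ((∑ i, L i) - L₀), ?_⟩
        have := hmc.const_mul ((m+1 : ℕ) : ℝ)⁻¹
        simpa only [← mul_assoc, inv_mul_cancel₀ hc0, one_mul] using this
      obtain ⟨C, hC⟩ := hC
      -- conclude
      refine ⟨fun y => limUnder atTop (fun n => u n y), ?_⟩
      filter_upwards [hz₀] with y hy
      obtain ⟨L', hL'⟩ := hy
      have h5 : Tendsto (fun n => u n y) atTop (nhds (L' - C)) := by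
        have := hL'.sub hC
        simpa [hcdef] using this
      rw [h5.limUnder_eq]
      exact h5
    · rintro ⟨v, hv⟩
      exact ⟨fun x => (N : ℝ)⁻¹ * ∑ i, v (x i), means_tendsto' μ N u v hv⟩
  · intro U v hU hv
    filter_upwards [hU, means_tendsto' μ N u v hv] with x h1 h2
    exact tendsto_nhds_unique h1 h2
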